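/- Fix $k\ge2$ and integers $i$ with $0\le i\le k-1$ and real $r\in[0,1)$ with $0<i+r<k$. The inequality $\big((k-i)(k-i-2)+r\big)r+(i+r)(k-i-r)\frac{1-2r}{2(1-r)}>0$ holds in each of the following cases: (i) $i\le k-2$ and $r\in[0,\tfrac12]$; (ii) $i=k-1$ and $r\in[0,\frac{k-1}{2k-1})$; (iii) $i=0$ and $r\in(0,\frac{2k^2-3k}{2k^2-2k-1})$. -/

import Mathlib

/-- (Lemma 5.8) For integers `k ≥ 2`, `0 ≤ i ≤ k-1` and real `r ∈ [0,1)` with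
`0 < i + r < k`, the inequality
`((k-i)(k-i-2) + r)·r + (i+r)(k-i-r)·(1-2r)/(2(1-r)) > 0`
holds if (i) `i ≤ k-2` and `r ∈ [0,1/2]`, or (ii) `i = k-1` and `r < (k-1)/(2k-1)`, or
(iii) `i = 0` and `0 < r < (2k²-3k)/(2k²-2k-1)`. -/
theorem stmt16 (k i : ℕ) (hk : 2 ≤ k) (hik : i ≤ k - 1)
    (r : ℝ) (hr0 : 0 ≤ r) (hr1 : r < 1)
    (hpos : 0 < (i : ℝ) + r) (hlt : (i : ℝ) + r < (k : ℝ))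
    (hcase :
      (i ≤ k - 2 ∧ r ≤ 1/2) ∨
      (i = k - 1 ∧ r < ((k : ℝ) - 1) / (2 * (k : ℝ) - 1)) ∨
      (i = 0 ∧ 0 < r ∧ r < (2 * (k : ℝ) ^ 2 - 3 * k) / (2 * (k : ℝ) ^ 2 - 2 * k - 1))) :
    0 < (((k : ℝ) - i) * ((k : ℝ) - i - 2) + r) * r +
        ((i : ℝ) + r) * ((k : ℝ) - i - r) * ((1 - 2 * r) / (2 * (1 - r))) := by
  have h1 : (0:ℝ) < 1 - r := by linarith
  have h2 : (0:ℝ) < 2 * (1 - r) := by linarith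
  have hk2 : (2:ℝ) ≤ (k:ℝ) := by exact_mod_cast hk
  have key : (((k : ℝ) - i) * ((k : ℝ) - i - 2) + r) * r +
        ((i : ℝ) + r) * ((k : ℝ) - i - r) * ((1 - 2 * r) / (2 * (1 - r))) =
      (2 * (1 - r) * ((((k : ℝ) - i) * ((k : ℝ) - i - 2) + r) * r) +
        ((i : ℝ) + r) * ((k : ℝ) - i - r) * (1 - 2 * r)) / (2 * (1 - r)) := by
    field_simp
  rw [key]
  apply div_pos _ h2
  rcases hcase with ⟨hi, hr⟩ | ⟨hi, hr⟩ | ⟨hi, hr, hr'⟩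
  · -- case (i)
    have hi' : (i:ℝ) + 2 ≤ (k:ℝ) := by
      have : i + 2 ≤ k := by omega
      exact_mod_cast this
    rcases eq_or_lt_of_le hr0 with h | h
    · have hi0 : (0:ℝ) < (i:ℝ) := by linarith [hpos, h.symm ▸ hpos]
      rw [← h]
      nlinarith
    · have t1 : (0:ℝ) < ((k:ℝ) - i) * ((k:ℝ) - i - 2) + r := by nlinarith
      have t2 : (0:ℝ) < 2 * (1 - r) * ((((k : ℝ) - i) * ((k : ℝ) - i - 2) + r) * r) :=
        by positivity
      have t3 : (0:ℝ) ≤ ((i : ℝ) + r) * ((k : ℝ) - i - r) * (1 - 2 * r) := by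
        apply mul_nonneg (mul_nonneg (le_of_lt hpos) (by linarith)) (by linarith)
      linarith
  · -- case (ii)
    have hik' : (i:ℝ) = (k:ℝ) - 1 := by
      have : (i:ℕ) + 1 = k := by omega
      have := congrArg (Nat.cast : ℕ → ℝ) this
      push_cast at this
      linarith
    have hden : (0:ℝ) < 2 * (k:ℝ) - 1 := by linarith
    have hnum : r * (2 * (k:ℝ) - 1) < (k:ℝ) - 1 := by
      rwa [lt_div_iff₀ hden] at hr
    rw [hik']
    nlinarith
  · -- case (iii)
    have hi0 : (i:ℝ) = 0 := by exact_mod_cast congrArg (Nat.cast : ℕ → ℝ) hi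
    have hden : (0:ℝ) < 2 * (k:ℝ) ^ 2 - 2 * k - 1 := by nlinarith
    have hnum : r * (2 * (k:ℝ) ^ 2 - 2 * k - 1) < 2 * (k:ℝ) ^ 2 - 3 * k := by
      rwa [lt_div_iff₀ hden] at hr'
    rw [hi0]
    nlinarith
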